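/- (Syzygies of leading-term matrices from saturated subsets.) Let A be a quasi-commutative bijective σ-PBW extension and L = [c_1 X_1 ⋯ c_t X_t] with X_j = x^{β_j} e_{i_j} monomials of A^m and c_j ∈ R nonzero. A homogeneous generating set for Syz(L) is given by the vectors s_v^J = Σ_{j∈J} b_{vj}^J x^{γ_j} ẽ_j, where J ranges over subsets of {1,…,t} saturated with respect to {X_1,…,X_t} with X_J ≠ 0, γ_j + β_j = exp(X_J), and (b_{vj}^J)_{j∈J} ranges over a generating set of the R-module Syz_R[σ^{γ_j}(c_j) c_{γ_j,β_j} : j ∈ J]. -/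

import Mathlib

namespace SPBW

/-- Monomials of the free module `A^m` over a σ-PBW extension in `n` variables:
pairs `(α, i)` representing `x^α e_i`. -/
abbrev Mon (n m : ℕ) := (Fin n → ℕ) × Fin m

/-- A presentation of the ring `A` as a σ-PBW (skew PBW) extension of `R`
in variables `x_1, …, x_n` (Definition 1 together with Theorem 6). -/
structure Ext (R A : Type*) [Ring R] [Ring A] (n : ℕ) where
  /-- the inclusion `R ⊆ A` -/
  φ : R →+* A
  inj : Function.Injective φ
  /-- the variables `x₁, …, xₙ` -/
  x : Fin n → A
  /-- the standard monomials `x^α = x₁^{α₁} ⋯ xₙ^{αₙ}` -/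
  mono : (Fin n → ℕ) → A
  mono_def : ∀ α, mono α = (List.ofFn fun i => x i ^ α i).prod
  /-- coordinates of an element of `A` in the left `R`-basis `Mon(A)` -/
  coord : A → ((Fin n → ℕ) →₀ R)
  coord_add : ∀ a b, coord (a + b) = coord a + coord b
  repr' : ∀ a : A, a = ((coord a).sum fun α r => φ r * mono α)
  coord_eq : ∀ (a : A) (cf : (Fin n → ℕ) →₀ R),
      a = (cf.sum fun α r => φ r * mono α) → coord a = cf
  /-- the injective endomorphisms `σ^α` of Proposition 2 / Theorem 6(a) -/
  σp : (Fin n → ℕ) → R →+* R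
  σp_inj : ∀ α, Function.Injective (σp α)
  /-- the structure constants `c_{α,β}` of Theorem 6(b) -/
  cst : (Fin n → ℕ) → (Fin n → ℕ) → R
  cst_left_inv : ∀ α β, ∃ c', c' * cst α β = 1
  /-- `x^α r = σ^α(r) x^α + p_{α,r}` with `p_{α,r}` of lower degree -/
  mono_mul_r : ∀ (α : Fin n → ℕ) (r : R), ∃ p : A,
      mono α * φ r = φ (σp α r) * mono α + p ∧
      (p = 0 ∨ ((coord p).support.sup fun β => ∑ i, β i) < ∑ i, α i)
  /-- `x^α x^β = c_{α,β} x^{α+β} + p_{α,β}` with `p_{α,β}` of lower degree -/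
  mono_mul : ∀ α β : Fin n → ℕ, ∃ p : A,
      mono α * mono β = φ (cst α β) * mono (α + β) + p ∧
      (p = 0 ∨ ((coord p).support.sup fun γ => ∑ i, γ i) < ∑ i, (α + β) i)

/-- A quasi-commutative σ-PBW extension: `x^α r = σ^α(r) x^α` and
`x^α x^β = c_{α,β} x^{α+β}` exactly (Remark 7(iii)). -/
structure QCExt (R A : Type*) [Ring R] [Ring A] (n : ℕ) extends Ext R A n where
  mono_mul_r' : ∀ (α : Fin n → ℕ) (r : R), mono α * φ r = φ (σp α r) * mono α
  mono_mul' : ∀ α β : Fin n → ℕ, mono α * mono β = φ (cst α β) * mono (α + β)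

/-- A bijective quasi-commutative σ-PBW extension: moreover all `σ^α` are
bijective and all structure constants `c_{α,β}` are invertible. -/
structure QCBijExt (R A : Type*) [Ring R] [Ring A] (n : ℕ) extends QCExt R A n where
  σp_bij : ∀ α, Function.Bijective (σp α)
  cst_unit : ∀ α β, IsUnit (cst α β)

/-- `le` is a monomial order on `Mon(A^m)` (Definition 15): a (total) order
compatible with multiplication by monomials, with `x^β x^α e_i ⪰ x^α e_i`,
and degree compatible. -/
structure IsMonomialOrder (n m : ℕ) (le : Mon n m → Mon n m → Prop) : Prop where
  refl : ∀ X, le X X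
  trans : ∀ X Y Z, le X Y → le Y Z → le X Z
  antisymm : ∀ X Y, le X Y → le Y X → X = Y
  total : ∀ X Y, le X Y ∨ le Y X
  mul_left : ∀ (α β : Fin n → ℕ) (i : Fin m), le (α, i) (β + α, i)
  compat : ∀ (α β : Fin n → ℕ) (i j : Fin m) (γ : Fin n → ℕ),
      le (α, i) (β, j) → le (γ + α, i) (γ + β, j)
  deg_compat : ∀ (α β : Fin n → ℕ) (i j : Fin m),
      (∑ k, α k) < ∑ k, β k → le (α, i) (β, j)

/-- `le` is a monomial order on `Mon(A)` (Definition 9). -/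
structure IsMonomialOrderA (n : ℕ) (le : (Fin n → ℕ) → (Fin n → ℕ) → Prop) : Prop where
  refl : ∀ α, le α α
  trans : ∀ α β γ, le α β → le β γ → le α γ
  antisymm : ∀ α β, le α β → le β α → α = β
  total : ∀ α β, le α β ∨ le β α
  add_compat : ∀ α β γ, le α β → le (γ + α) (γ + β)
  zero_le : ∀ α, le 0 α
  deg_compat : ∀ α β, (∑ i, α i) < ∑ i, β i → le α β

variable {R A : Type*} [Ring R] [Ring A] {n m : ℕ}

/-- `α` is the exponent of the leading monomial of `a ∈ A` w.r.t. the order `leA`. -/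
def IsLMA (E : Ext R A n) (leA : (Fin n → ℕ) → (Fin n → ℕ) → Prop)
    (a : A) (α : Fin n → ℕ) : Prop :=
  E.coord a α ≠ 0 ∧ ∀ β, E.coord a β ≠ 0 → leA β α

/-- `X` is the leading monomial of the vector `f ∈ A^m` w.r.t. the order `le`. -/
def IsLM (E : Ext R A n) (le : Mon n m → Mon n m → Prop)
    (f : Fin m → A) (X : Mon n m) : Prop :=
  E.coord (f X.2) X.1 ≠ 0 ∧
    ∀ (β : Fin n → ℕ) (v : Fin m), E.coord (f v) β ≠ 0 → le (β, v) X

/-- One step reduction `f →_F h` (Definition 20). -/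
def Reduces (E : Ext R A n) (le : Mon n m → Mon n m → Prop)
    (F : Set (Fin m → A)) (f h : Fin m → A) : Prop :=
  ∃ X : Mon n m, IsLM E le f X ∧
    ∃ (t : ℕ) (g : Fin t → Fin m → A) (r : Fin t → R)
      (a : Fin t → Fin n → ℕ) (β : Fin t → Fin n → ℕ),
      (∀ i, g i ∈ F) ∧
      (∀ i, IsLM E le (g i) (β i, X.2)) ∧
      (∀ i, a i + β i = X.1) ∧
      E.coord (f X.2) X.1 =
        ∑ i, r i * (E.σp (a i) (E.coord (g i X.2) (β i)) * E.cst (a i) (β i)) ∧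
      h = f - ∑ i, (E.φ (r i) * E.mono (a i)) • g i

/-- `f` is reduced (minimal) w.r.t. `F`. -/
def Reduced (E : Ext R A n) (le : Mon n m → Mon n m → Prop)
    (F : Set (Fin m → A)) (f : Fin m → A) : Prop :=
  f = 0 ∨ ¬ ∃ h, Reduces E le F f h

/-- `f →_F,+ h`: reduction in finitely many steps. -/
def ReducesStar (E : Ext R A n) (le : Mon n m → Mon n m → Prop)
    (F : Set (Fin m → A)) : (Fin m → A) → (Fin m → A) → Prop :=
  Relation.ReflTransGen (Reduces E le F)

/-- `G` is a Gröbner basis of the submodule `M ⊆ A^m` (Definition 25):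
a finite set of nonzero vectors of `M` such that every nonzero `f ∈ M`
is reducible w.r.t. `G`. -/
def IsGB (E : Ext R A n) (le : Mon n m → Mon n m → Prop)
    (M : Submodule A (Fin m → A)) (G : Finset (Fin m → A)) : Prop :=
  (↑G : Set (Fin m → A)) ⊆ (M : Set (Fin m → A)) \ {0} ∧
    ∀ f ∈ M, f ≠ 0 → ∃ h, Reduces E le (↑G) f h

end SPBW

open SPBW

/-- The exponent of `X_J = lcm{X_j : j ∈ J}`: the componentwise max of the
exponents `β_j`, `j ∈ J`. -/
def supExp {t n : ℕ} (β : Fin t → Fin n → ℕ) (J : Finset (Fin t)) : Fin n → ℕ :=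
  fun i => J.sup fun j => β j i

/-- The exponent `γ_j` with `γ_j + β_j = exp(X_J)`. -/
def gammaExp {t n : ℕ} (β : Fin t → Fin n → ℕ) (J : Finset (Fin t)) (j : Fin t) :
    Fin n → ℕ :=
  fun i => supExp β J i - β j i

section Aux

variable {R A : Type*} [Ring R] [Ring A] {n : ℕ}

lemma SPBW.Ext.coord_zero (E : SPBW.Ext R A n) : E.coord 0 = 0 :=
  E.coord_eq 0 0 (by simp)

lemma SPBW.Ext.coord_sum (E : SPBW.Ext R A n) {ι : Type*} (s : Finset ι) (f : ι → A) :
    E.coord (∑ i ∈ s, f i) = ∑ i ∈ s, E.coord (f i) := by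
  classical
  induction s using Finset.induction with
  | empty => simp [Ext.coord_zero]
  | insert _ _ hne ih => rw [Finset.sum_insert hne, Finset.sum_insert hne, E.coord_add, ih]

lemma SPBW.Ext.coord_phi_mono (E : SPBW.Ext R A n) (r : R) (α : Fin n → ℕ) :
    E.coord (E.φ r * E.mono α) = Finsupp.single α r := by
  apply E.coord_eq
  rw [Finsupp.sum_single_index (by simp)]

lemma SPBW.Ext.phi_mono_eq_zero (E : SPBW.Ext R A n) {r : R} {α : Fin n → ℕ}
    (h : E.φ r * E.mono α = 0) : r = 0 := by
  have h2 : Finsupp.single α r = 0 := by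
    rw [← Ext.coord_phi_mono E r α, h, Ext.coord_zero]
  exact Finsupp.single_eq_zero.mp h2

lemma SPBW.QCExt.mul_phi_mono (Q : SPBW.QCExt R A n) (θ : Fin n → ℕ) (r : R) (γ : Fin n → ℕ) :
    Q.mono θ * (Q.φ r * Q.mono γ) =
      Q.φ (Q.σp θ r * Q.cst θ γ) * Q.mono (θ + γ) := by
  rw [← mul_assoc, Q.mono_mul_r', mul_assoc, Q.mono_mul', ← mul_assoc, ← map_mul]

lemma SPBW.QCExt.phi_mono_mul_phi_mono (Q : SPBW.QCExt R A n) (r : R) (γ : Fin n → ℕ)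
    (c : R) (b : Fin n → ℕ) :
    (Q.φ r * Q.mono γ) * (Q.φ c * Q.mono b) =
      Q.φ (r * (Q.σp γ c * Q.cst γ b)) * Q.mono (γ + b) := by
  rw [mul_assoc, Q.mul_phi_mono, ← mul_assoc, ← map_mul]

end Aux

/-- **(Lemma 38.)** Let `A` be a quasi-commutative bijective σ-PBW extension and
`L = [c₁X₁ ⋯ c_tX_t]` with `X_j = x^{β_j} e_{idx j}` monomials of `A^m` and
`c_j ∈ R` nonzero. A homogeneous generating set for `Syz(L)` is given by the
vectors `s_v^J = Σ_{j∈J} b_{vj}^J x^{γ_j} ẽ_j`, where `J` ranges over subsets of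
`{1,…,t}` saturated w.r.t. `{X₁,…,X_t}` with `X_J ≠ 0` (all indices in `J` equal),
`γ_j + β_j = exp(X_J)`, and `(b_{vj}^J)_{j∈J}` ranges over a generating set
`B J` of the left `R`-module `Syz_R[σ^{γ_j}(c_j) c_{γ_j,β_j} : j ∈ J]`. -/
theorem syzygy_of_monomial_matrix_saturated
    (R A : Type*) [Ring R] [Ring A] (n m : ℕ)
    (E : SPBW.QCBijExt R A n)
    (t : ℕ) (c : Fin t → R) (hc : ∀ j, c j ≠ 0)
    (idx : Fin t → Fin m) (β : Fin t → Fin n → ℕ)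
    -- the columns `c_j X_j` of `L`
    (L : Fin t → Fin m → A)
    (hL : ∀ j, L j = fun v =>
      if v = idx j then E.φ (c j) * E.mono (β j) else 0)
    -- `B J` is a generating set of `Syz_R[σ^{γ_j}(c_j) c_{γ_j,β_j} : j ∈ J]`
    (B : Finset (Fin t) → Set (Fin t → R))
    (hB : ∀ (J : Finset (Fin t)) (u : Fin m), J.Nonempty →
      (∀ j ∈ J, idx j = u) →
      (∀ j, idx j = u → (∀ i, β j i ≤ supExp β J i) → j ∈ J) →
      ∀ b : Fin t → R,
        ((∀ j ∉ J, b j = 0) ∧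
          (∑ j ∈ J, b j *
            (E.σp (gammaExp β J j) (c j) * E.cst (gammaExp β J j) (β j))) = 0)
          ↔ b ∈ Submodule.span R (B J)) :
    ∀ h : Fin t → A,
      (∑ j, h j • L j) = 0 ↔
        h ∈ Submodule.span A
          {s : Fin t → A | ∃ (J : Finset (Fin t)) (u : Fin m),
            J.Nonempty ∧ (∀ j ∈ J, idx j = u) ∧
            (∀ j, idx j = u → (∀ i, β j i ≤ supExp β J i) → j ∈ J) ∧
            ∃ b ∈ B J, s = fun j => E.φ (b j) * E.mono (gammaExp β J j)} := by
  classical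
  intro h
  constructor
  · intro hsyz
    -- the set of "degrees" (δ, u) occurring in the products h j • L j
    set D : Finset ((Fin n → ℕ) × Fin m) :=
      Finset.univ.biUnion (fun j => (E.coord (h j)).support.image fun α => (α + β j, idx j))
      with hD
    -- the homogeneous components of h, grouped by degree
    set g : (Fin n → ℕ) × Fin m → (Fin t → A) := fun p j =>
      if idx j = p.2 ∧ ∀ i, β j i ≤ p.1 i then
        E.φ (E.coord (h j) (fun i => p.1 i - β j i)) * E.mono (fun i => p.1 i - β j i)
      else 0 with hg
    set Jp : (Fin n → ℕ) × Fin m → Finset (Fin t) := fun p =>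
      Finset.univ.filter (fun j => idx j = p.2 ∧ ∀ i, β j i ≤ p.1 i) with hJp
    set S : (Fin n → ℕ) × Fin m → R := fun p =>
      ∑ j ∈ Jp p,
        E.coord (h j) (fun i => p.1 i - β j i) *
          (E.σp (fun i => p.1 i - β j i) (c j) * E.cst (fun i => p.1 i - β j i) (β j))
      with hS
    -- Claim A : h decomposes as the sum of its homogeneous components
    have hdecomp : ∀ j, h j = ∑ p ∈ D, g p j := by
      intro j
      conv_lhs => rw [E.repr' (h j)]
      rw [Finsupp.sum]
      refine Finset.sum_bij_ne_zero (fun α _ _ => (α + β j, idx j)) ?_ ?_ ?_ ?_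
      · intro α h1 h2
        exact Finset.mem_biUnion.mpr ⟨j, Finset.mem_univ j,
          Finset.mem_image.mpr ⟨α, h1, rfl⟩⟩
      · intro a1 _ _ a2 _ _ hEq
        have := congrArg Prod.fst hEq
        funext i
        have := congrFun this i
        simpa using this
      · intro p hpD hpne
        have hcond : idx j = p.2 ∧ ∀ i, β j i ≤ p.1 i := by
          by_contra hcontra
          rw [hg] at hpne
          simp only [if_neg hcontra] at hpne
          exact hpne rfl
        have hcoordne : E.coord (h j) (fun i => p.1 i - β j i) ≠ 0 := by
          intro h0
          rw [hg] at hpne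
          simp only [if_pos hcond, h0, map_zero, zero_mul] at hpne
          exact hpne rfl
        refine ⟨fun i => p.1 i - β j i, Finsupp.mem_support_iff.mpr hcoordne, ?_, ?_⟩
        · intro h0
          exact hcoordne (E.phi_mono_eq_zero (by rw [h0]))
        · have h1' : (fun i => p.1 i - β j i) + β j = p.1 := by
            funext i
            show p.1 i - β j i + β j i = p.1 i
            exact Nat.sub_add_cancel (hcond.2 i)
          show ((fun i => p.1 i - β j i) + β j, idx j) = p
          exact Prod.ext h1' hcond.1
      · intro α h1 h2
        rw [hg]
        simp [Nat.add_sub_cancel, Nat.le_add_left]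
    -- Claim B : the products of the homogeneous components with L
    have hprod : ∀ p, (∑ j, g p j • L j) =
        fun v => if v = p.2 then E.φ (S p) * E.mono p.1 else 0 := by
      intro p
      funext v
      simp only [Finset.sum_apply, Pi.smul_apply, smul_eq_mul]
      by_cases hv : v = p.2
      · subst hv
        rw [if_pos rfl]
        rw [← Finset.sum_subset (Jp p).subset_univ (fun j _ hj => by
          rw [hg]
          have : ¬ (idx j = p.2 ∧ ∀ i, β j i ≤ p.1 i) := by
            intro hcond
            exact hj (Finset.mem_filter.mpr ⟨Finset.mem_univ j, hcond⟩)
          simp only [if_neg this, zero_mul])]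
        have key : ∀ j ∈ Jp p, g p j * L j p.2 =
            E.φ (E.coord (h j) (fun i => p.1 i - β j i) *
              (E.σp (fun i => p.1 i - β j i) (c j) *
                E.cst (fun i => p.1 i - β j i) (β j))) * E.mono p.1 := by
          intro j hj
          have hcond := (Finset.mem_filter.mp hj).2
          rw [hg]
          simp only [hL j]
          rw [if_pos hcond, if_pos hcond.1.symm]
          rw [E.toQCExt.phi_mono_mul_phi_mono]
          have he : (fun i => p.1 i - β j i) + β j = p.1 := by
            funext i
            simp only [Pi.add_apply]
            exact Nat.sub_add_cancel (hcond.2 i)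
          rw [he]
        rw [Finset.sum_congr rfl key, ← Finset.sum_mul, ← map_sum, hS]
      · rw [if_neg hv]
        refine Finset.sum_eq_zero fun j _ => ?_
        by_cases hcond : idx j = p.2 ∧ ∀ i, β j i ≤ p.1 i
        · rw [hL j]
          simp only [hcond.1, if_neg hv, mul_zero]
        · rw [hg]
          simp only [if_neg hcond, zero_mul]
    -- Claim C : each homogeneous component is itself a syzygy
    have hSzero : ∀ p ∈ D, S p = 0 := by
      intro p0 hp0
      have hsum0 : (∑ p ∈ D, fun v => if v = p.2 then E.φ (S p) * E.mono p.1 else 0)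
          = (0 : Fin m → A) := by
        calc (∑ p ∈ D, fun v => if v = p.2 then E.φ (S p) * E.mono p.1 else 0)
            = ∑ p ∈ D, ∑ j, g p j • L j := by
              refine Finset.sum_congr rfl fun p _ => (hprod p).symm
          _ = ∑ j, ∑ p ∈ D, g p j • L j := Finset.sum_comm
          _ = ∑ j, h j • L j := by
              refine Finset.sum_congr rfl fun j _ => ?_
              rw [hdecomp j, Finset.sum_smul]
          _ = 0 := hsyz
      have hcomp : (∑ p ∈ D, if p0.2 = p.2 then E.φ (S p) * E.mono p.1 else 0) = 0 := by
        have := congrFun hsum0 p0.2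
        simpa using this
      have hco : (∑ p ∈ D, E.coord (if p0.2 = p.2 then E.φ (S p) * E.mono p.1 else 0))
          = 0 := by
        rw [← E.coord_sum, hcomp, E.coord_zero]
      have heval : (∑ p ∈ D,
          (E.coord (if p0.2 = p.2 then E.φ (S p) * E.mono p.1 else 0)) p0.1) = 0 := by
        rw [← Finsupp.finset_sum_apply, hco]
        rfl
      rw [Finset.sum_eq_single p0] at heval
      · rw [if_pos rfl, E.coord_phi_mono, Finsupp.single_eq_same] at heval
        exact heval
      · intro p hp hpne
        by_cases h2 : p0.2 = p.2
        · rw [if_pos h2, E.coord_phi_mono, Finsupp.single_apply, if_neg]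
          intro h1
          exact hpne (Prod.ext h1 h2.symm)
        · rw [if_neg h2, E.coord_zero]
          rfl
      · intro hp0'
        exact absurd hp0 hp0'
    -- Claim D : each homogeneous component belongs to the span
    have hginspan : ∀ p ∈ D, g p ∈ Submodule.span A
        {s : Fin t → A | ∃ (J : Finset (Fin t)) (u : Fin m),
          J.Nonempty ∧ (∀ j ∈ J, idx j = u) ∧
          (∀ j, idx j = u → (∀ i, β j i ≤ supExp β J i) → j ∈ J) ∧
          ∃ b ∈ B J, s = fun j => E.φ (b j) * E.mono (gammaExp β J j)} := by
      intro p hp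
      obtain ⟨j0, -, hj0⟩ := Finset.mem_biUnion.mp hp
      obtain ⟨α0, -, hα0⟩ := Finset.mem_image.mp hj0
      have hJne : (Jp p).Nonempty := by
        refine ⟨j0, Finset.mem_filter.mpr ⟨Finset.mem_univ j0, ?_, ?_⟩⟩
        · rw [← hα0]
        · intro i
          rw [← hα0]
          simp
      have hJu : ∀ j ∈ Jp p, idx j = p.2 := fun j hj => (Finset.mem_filter.mp hj).2.1
      have hβle : ∀ j ∈ Jp p, ∀ i, β j i ≤ p.1 i :=
        fun j hj => (Finset.mem_filter.mp hj).2.2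
      have hsup_le : ∀ i, supExp β (Jp p) i ≤ p.1 i := by
        intro i
        exact Finset.sup_le fun j hj => hβle j hj i
      have hsat : ∀ j, idx j = p.2 → (∀ i, β j i ≤ supExp β (Jp p) i) → j ∈ Jp p := by
        intro j hju hjle
        exact Finset.mem_filter.mpr ⟨Finset.mem_univ j, hju,
          fun i => le_trans (hjle i) (hsup_le i)⟩
      set θ : Fin n → ℕ := fun i => p.1 i - supExp β (Jp p) i with hθ
      set γ : Fin t → Fin n → ℕ := fun j => gammaExp β (Jp p) j with hγ
      have hble : ∀ j ∈ Jp p, ∀ i, β j i ≤ supExp β (Jp p) i := by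
        intro j hj i
        exact Finset.le_sup (f := fun j => β j i) hj
      have hθγ : ∀ j ∈ Jp p, θ + γ j = fun i => p.1 i - β j i := by
        intro j hj
        funext i
        show θ i + γ j i = p.1 i - β j i
        have h1 : θ i = p.1 i - supExp β (Jp p) i := by rw [hθ]
        have h2 : γ j i = supExp β (Jp p) i - β j i := by rw [hγ]; rfl
        have h3 := hble j hj i
        have h4 := hsup_le i
        omega
      have hθs : θ + supExp β (Jp p) = p.1 := by
        funext i
        show θ i + supExp β (Jp p) i = p.1 i
        have h1 : θ i = p.1 i - supExp β (Jp p) i := by rw [hθ]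
        have h4 := hsup_le i
        omega
      set r : Fin t → R := fun j => E.coord (h j) (fun i => p.1 i - β j i) with hr
      have hbex : ∀ j, ∃ b0 : R, E.σp θ b0 = r j * ↑(E.cst_unit θ (γ j)).unit⁻¹ :=
        fun j => (E.σp_bij θ).2 _
      set b' : Fin t → R := fun j =>
        if j ∈ Jp p then Classical.choose (hbex j) else 0 with hb'
      have hb'0 : ∀ j ∉ Jp p, b' j = 0 := by
        intro j hj
        rw [hb']
        simp [hj]
      have hσb' : ∀ j ∈ Jp p, E.σp θ (b' j) * E.cst θ (γ j) = r j := by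
        intro j hj
        simp only [hb', if_pos hj]
        have hcs := Classical.choose_spec (hbex j)
        simp only [hcs]
        rw [mul_assoc]
        rw [(E.cst_unit θ (γ j)).val_inv_mul, mul_one]
      -- the component g p is x^θ times the candidate syzygy vector
      have hgθ : g p = fun j => E.mono θ * (E.φ (b' j) * E.mono (γ j)) := by
        funext j
        by_cases hj : j ∈ Jp p
        · have hcond := (Finset.mem_filter.mp hj).2
          rw [hg]
          simp only [if_pos hcond]
          rw [E.toQCExt.mul_phi_mono, hσb' j hj, hθγ j hj]
        · have hcond : ¬ (idx j = p.2 ∧ ∀ i, β j i ≤ p.1 i) := fun hcond =>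
            hj (Finset.mem_filter.mpr ⟨Finset.mem_univ j, hcond⟩)
          rw [hg]
          simp only [if_neg hcond, hb'0 j hj, map_zero, zero_mul, mul_zero]
      -- the candidate coefficient vector b' is an R-syzygy
      have hT : (∑ j ∈ Jp p, b' j * (E.σp (γ j) (c j) * E.cst (γ j) (β j))) = 0 := by
        have hA0 : E.φ (E.σp θ (∑ j ∈ Jp p, b' j * (E.σp (γ j) (c j) * E.cst (γ j) (β j)))
            * E.cst θ (supExp β (Jp p))) * E.mono p.1 = 0 := by
          rw [← hθs, ← E.toQCExt.mul_phi_mono θ _ (supExp β (Jp p))]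
          rw [map_sum, Finset.sum_mul, Finset.mul_sum]
          have key2 : ∀ j ∈ Jp p,
              E.mono θ * (E.φ (b' j * (E.σp (γ j) (c j) * E.cst (γ j) (β j))) *
                E.mono (supExp β (Jp p))) = g p j * L j p.2 := by
            intro j hj
            have hγβ : γ j + β j = supExp β (Jp p) := by
              funext i
              show γ j i + β j i = supExp β (Jp p) i
              have h2 : γ j i = supExp β (Jp p) i - β j i := by rw [hγ]; rfl
              have h3 := hble j hj i
              omega
            rw [← hγβ, ← E.toQCExt.phi_mono_mul_phi_mono, ← mul_assoc]
            simp only [hgθ, hL j]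
            rw [if_pos ((hJu j hj).symm)]
          rw [Finset.sum_congr rfl key2]
          rw [Finset.sum_subset (Jp p).subset_univ (fun j _ hj => by
            have hcond : ¬ (idx j = p.2 ∧ ∀ i, β j i ≤ p.1 i) := fun hcond =>
              hj (Finset.mem_filter.mpr ⟨Finset.mem_univ j, hcond⟩)
            rw [hg]
            simp only [if_neg hcond, zero_mul])]
          have h2 := congrFun (hprod p) p.2
          simp only [Finset.sum_apply, Pi.smul_apply, smul_eq_mul] at h2
          rw [h2]
          simp only [hSzero p hp, map_zero, zero_mul, if_pos rfl, ite_self]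
        have h0 := E.phi_mono_eq_zero hA0
        obtain ⟨w, hw⟩ := E.cst_unit θ (supExp β (Jp p))
        have hx : E.σp θ (∑ j ∈ Jp p, b' j *
            (E.σp (γ j) (c j) * E.cst (γ j) (β j))) = 0 := by
          have h3 := congrArg (fun x : R => x * ↑w⁻¹) h0
          simp only [zero_mul] at h3
          rwa [mul_assoc, ← hw, Units.mul_inv, mul_one] at h3
        exact E.σp_inj θ (by rw [hx, map_zero])
      have hb'span : b' ∈ Submodule.span R (B (Jp p)) :=
        (hB (Jp p) p.2 hJne hJu hsat b').mp ⟨hb'0, hT⟩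
      -- the candidate vector lies in the span of the generators
      have hΦ : ∀ b ∈ Submodule.span R (B (Jp p)),
          (fun j => E.φ (b j) * E.mono (γ j)) ∈ Submodule.span A
            {s : Fin t → A | ∃ (J : Finset (Fin t)) (u : Fin m),
              J.Nonempty ∧ (∀ j ∈ J, idx j = u) ∧
              (∀ j, idx j = u → (∀ i, β j i ≤ supExp β J i) → j ∈ J) ∧
              ∃ b ∈ B J, s = fun j => E.φ (b j) * E.mono (gammaExp β J j)} := by
        intro b hb
        induction hb using Submodule.span_induction with
        | mem s hs =>
            exact Submodule.subset_span ⟨Jp p, p.2, hJne, hJu, hsat, s, hs, rfl⟩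
        | zero =>
            have hz : (fun j => E.φ ((0 : Fin t → R) j) * E.mono (γ j)) =
                (0 : Fin t → A) := by
              funext j
              simp
            rw [hz]
            exact Submodule.zero_mem _
        | add b1 b2 _ _ ih1 ih2 =>
            have ha : (fun j => E.φ ((b1 + b2) j) * E.mono (γ j)) =
                (fun j => E.φ (b1 j) * E.mono (γ j)) +
                  fun j => E.φ (b2 j) * E.mono (γ j) := by
              funext j
              simp [add_mul]
            rw [ha]
            exact Submodule.add_mem _ ih1 ih2
        | smul a b _ ih =>
            have ha : (fun j => E.φ ((a • b) j) * E.mono (γ j)) =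
                E.φ a • fun j => E.φ (b j) * E.mono (γ j) := by
              funext j
              simp [mul_assoc]
            rw [ha]
            exact Submodule.smul_mem _ _ ih
      rw [hgθ]
      have hsm : (fun j => E.mono θ * (E.φ (b' j) * E.mono (γ j))) =
          E.mono θ • fun j => E.φ (b' j) * E.mono (γ j) := rfl
      rw [hsm]
      exact Submodule.smul_mem _ _ (hΦ b' hb'span)
    -- conclude
    have hfin : h = ∑ p ∈ D, g p := by
      funext j
      rw [hdecomp j, Finset.sum_apply]
    rw [hfin]
    exact Submodule.sum_mem _ fun p hp => hginspan p hp
  · intro hmem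
    induction hmem using Submodule.span_induction with
    | mem s hs =>
        obtain ⟨J, u, hJne, hJu, hsat, b, hbB, rfl⟩ := hs
        obtain ⟨hb0, hbsum⟩ := (hB J u hJne hJu hsat b).mpr (Submodule.subset_span hbB)
        funext v
        simp only [Finset.sum_apply, Pi.smul_apply, smul_eq_mul, Pi.zero_apply]
        rw [← Finset.sum_subset J.subset_univ
          (fun j _ hj => by simp [hb0 j hj])]
        by_cases hv : v = u
        · subst hv
          have key : ∀ j ∈ J, (E.φ (b j) * E.mono (gammaExp β J j)) * L j v =
              E.φ (b j * (E.σp (gammaExp β J j) (c j) * E.cst (gammaExp β J j) (β j))) *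
                E.mono (supExp β J) := by
            intro j hj
            rw [hL j]
            simp only [hJu j hj, if_pos rfl, eq_self_iff_true, if_true]
            rw [E.toQCExt.phi_mono_mul_phi_mono]
            have he : gammaExp β J j + β j = supExp β J := by
              funext i
              simp only [Pi.add_apply, gammaExp]
              exact Nat.sub_add_cancel (Finset.le_sup (f := fun j => β j i) hj)
            rw [he]
          rw [Finset.sum_congr rfl key, ← Finset.sum_mul, ← map_sum, hbsum, map_zero,
            zero_mul]
        · refine Finset.sum_eq_zero fun j hj => ?_
          rw [hL j]
          simp [hJu j hj, hv]
    | zero => simp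
    | add s1 s2 _ _ ih1 ih2 => simp [add_smul, Finset.sum_add_distrib, ih1, ih2]
    | smul a s _ ih =>
        simp only [Pi.smul_apply, smul_eq_mul, mul_smul]
        rw [← Finset.smul_sum, ih, smul_zero]
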